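/- Let P be analytic on D with P(0)=1 and Re(e^{iγ}P(z)) > β cos γ in D, P'(0) = 2(1-β)e^{-iγ}λ cos γ with |λ| < 1 (γ real, |γ| < π/2, 0 ≤ β < 1). Then there exists a ∈ closure(D) such that P''(0) = 4(1-β)[(1-|λ|²)a + λ²]e^{-iγ} cos γ. -/

import Mathlib

open Complex Metric Set

private lemma aux_mobius (l t : ℂ) (ht : ‖t‖ ≤ 1) (hl : ‖l‖ < 1) :
    ‖t - l‖ ≤ ‖1 - (starRingEnd ℂ) l * t‖ := by
  have h1 : Complex.normSq t ≤ 1 := by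
    rw [← Complex.sq_norm]; nlinarith [norm_nonneg t]
  have h2 : Complex.normSq l ≤ 1 := by
    rw [← Complex.sq_norm]; nlinarith [norm_nonneg l]
  rw [Complex.norm_def, Complex.norm_def]
  apply Real.sqrt_le_sqrt
  simp only [Complex.normSq_apply, Complex.sub_re, Complex.sub_im, Complex.mul_re,
    Complex.mul_im, Complex.one_re, Complex.one_im, Complex.conj_re, Complex.conj_im] at *
  nlinarith [mul_nonneg (sub_nonneg.2 h2) (sub_nonneg.2 h1)]

private lemma aux_abslt (u : ℂ) (c : ℝ) (hc : 0 < c) (h : -c < u.re) :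
    ‖u‖ < ‖u + 2 * (c : ℂ)‖ := by
  rw [Complex.norm_def, Complex.norm_def]
  apply Real.sqrt_lt_sqrt (Complex.normSq_nonneg _)
  simp only [Complex.normSq_apply, Complex.add_re, Complex.add_im, Complex.mul_re,
    Complex.mul_im, Complex.ofReal_re, Complex.ofReal_im]
  norm_num
  nlinarith

theorem stmt_14 (γ β : ℝ) (hγ : |γ| < Real.pi / 2) (hβ0 : 0 ≤ β) (hβ1 : β < 1)
    (lam : ℂ) (hlam : ‖lam‖ < 1)
    (P : ℂ → ℂ) (hP : DifferentiableOn ℂ P (ball (0:ℂ) 1)) (hP0 : P 0 = 1)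
    (hre : ∀ z ∈ ball (0:ℂ) 1, β * Real.cos γ < (Complex.exp (γ * Complex.I) * P z).re)
    (hP'0 : deriv P 0 = 2 * (1 - β) * Complex.exp (-(γ * Complex.I)) * lam * Real.cos γ) :
    ∃ a : ℂ, ‖a‖ ≤ 1 ∧
      iteratedDeriv 2 P 0 =
        4 * (1 - β) * (((1 - (‖lam‖)^2 : ℝ) : ℂ) * a + lam^2) *
          Complex.exp (-(γ * Complex.I)) * Real.cos γ := by
  have hγ' := abs_lt.1 hγ
  have hcos : 0 < Real.cos γ := Real.cos_pos_of_mem_Ioo ⟨by linarith [hγ'.1], hγ'.2⟩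
  set c : ℝ := (1 - β) * Real.cos γ with hc_def
  have hc : 0 < c := mul_pos (by linarith) hcos
  have hcC : (c : ℂ) ≠ 0 := by exact_mod_cast hc.ne'
  set E : ℂ := Complex.exp (γ * Complex.I) with hE_def
  have hE0 : E ≠ 0 := Complex.exp_ne_zero _
  have hEinv : Complex.exp (-(γ * Complex.I)) = E⁻¹ := by rw [hE_def, Complex.exp_neg]
  have hEre : E.re = Real.cos γ := by rw [hE_def]; exact Complex.exp_ofReal_mul_I_re γ
  set u : ℂ → ℂ := fun z => E * (P z - 1) with hu_def
  set d : ℂ → ℂ := fun z => u z + 2 * (c : ℂ) with hd_def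
  set w : ℂ → ℂ := fun z => u z / d z with hw_def
  have h0 : (0:ℂ) ∈ ball (0:ℂ) 1 := mem_ball_self one_pos
  have hu0 : u 0 = 0 := by simp [hu_def, hP0]
  have hd0 : d 0 = 2 * (c : ℂ) := by simp [hd_def, hu0]
  have hw0 : w 0 = 0 := by simp [hw_def, hu0]
  have hure : ∀ z ∈ ball (0:ℂ) 1, -c < (u z).re := by
    intro z hz
    have h1 := hre z hz
    have h2 : (u z).re = (E * P z).re - Real.cos γ := by
      rw [hu_def]; simp only [mul_sub, mul_one, Complex.sub_re, hEre]
    rw [h2, hc_def]; nlinarith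
  have hdre : ∀ z ∈ ball (0:ℂ) 1, 0 < (d z).re := by
    intro z hz
    have h1 := hure z hz
    have h2 : (d z).re = (u z).re + 2 * c := by
      rw [hd_def]; simp [Complex.add_re]
    rw [h2]; linarith
  have hdne : ∀ z ∈ ball (0:ℂ) 1, d z ≠ 0 := by
    intro z hz h
    have := hdre z hz; rw [h] at this; simp at this
  -- differentiability
  have hPdiff : ∀ z ∈ ball (0:ℂ) 1, DifferentiableAt ℂ P z := fun z hz =>
    hP.differentiableAt (isOpen_ball.mem_nhds hz)
  have hud : DifferentiableOn ℂ u (ball (0:ℂ) 1) := fun z hz =>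
    (((hPdiff z hz).sub_const 1).const_mul E).differentiableWithinAt
  have hdd : DifferentiableOn ℂ d (ball (0:ℂ) 1) := fun z hz =>
    ((hud z hz).add_const _)
  have hwd : DifferentiableOn ℂ w (ball (0:ℂ) 1) := hud.div hdd hdne
  -- w maps ball to ball
  have hmaps : MapsTo w (ball (0:ℂ) 1) (ball (w 0) 1) := by
    rw [hw0]
    intro z hz
    rw [mem_ball_zero_iff]
    have h2 : ‖u z‖ < ‖d z‖ := by
      rw [hd_def]; exact aux_abslt (u z) c hc (hure z hz)
    have h3 : 0 < ‖d z‖ := (norm_nonneg _).trans_lt h2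
    rw [hw_def]
    simp only [norm_div]
    exact (div_lt_one h3).2 h2
  -- derivative of u at points of the ball
  have hu' : ∀ z ∈ ball (0:ℂ) 1, HasDerivAt u (E * deriv P z) z := fun z hz =>
    (((hPdiff z hz).hasDerivAt).sub_const 1).const_mul E
  have hd' : ∀ z ∈ ball (0:ℂ) 1, HasDerivAt d (E * deriv P z) z := fun z hz =>
    (hu' z hz).add_const _
  set g : ℂ → ℂ := fun z => 2 * (c : ℂ) * (E * deriv P z) / d z ^ 2 with hg_def
  have hw' : ∀ z ∈ ball (0:ℂ) 1, HasDerivAt w (g z) z := by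
    intro z hz
    have h := ((hu' z hz).div (hd' z hz) (hdne z hz))
    refine h.congr_deriv ?_
    rw [hg_def, hd_def]
    simp only
    ring
  have hEA : E * deriv P 0 = 2 * (c : ℂ) * lam := by
    rw [hP'0, hEinv, hc_def]
    push_cast
    field_simp
  have hderw0 : deriv w 0 = lam := by
    rw [(hw' 0 h0).deriv, hg_def]
    simp only
    rw [hEA, hd0]
    field_simp
  -- power series of w at 0
  have hwan : AnalyticAt ℂ w 0 := hwd.analyticAt (isOpen_ball.mem_nhds h0)
  obtain ⟨p, hp⟩ := hwan
  set φ : ℂ → ℂ := dslope w 0 with hφ_def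
  have hφp : HasFPowerSeriesAt φ p.fslope 0 := hp.has_fpower_series_dslope_fslope
  set a2 : ℂ := p.coeff 2 with ha2_def
  have ha2 : deriv φ 0 = a2 := by
    rw [hφp.deriv]
    exact FormalMultilinearSeries.coeff_fslope
  -- iterated derivative of w
  obtain ⟨r, hpr⟩ := hp
  have hfact := hpr.factorial_smul (y := (1:ℂ)) 2
  have hiter : iteratedDeriv 2 w 0 = 2 * a2 := by
    rw [iteratedDeriv_eq_iteratedFDeriv, ← hfact]
    show (Nat.factorial 2) • p.coeff 2 = 2 * a2
    rw [← ha2_def]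
    simp only [nsmul_eq_mul]
    norm_num [Nat.factorial]
  -- second derivative of w via explicit computation
  have hPan : AnalyticOnNhd ℂ P (ball (0:ℂ) 1) := hP.analyticOnNhd isOpen_ball
  have hP'an : AnalyticOnNhd ℂ (deriv P) (ball (0:ℂ) 1) := hPan.deriv
  set B : ℂ := deriv (deriv P) 0 with hB_def
  have hP'd : HasDerivAt (deriv P) B 0 := ((hP'an 0 h0).differentiableAt).hasDerivAt
  have hEqg : deriv w =ᶠ[nhds 0] g := by
    filter_upwards [isOpen_ball.mem_nhds h0] with z hz
    exact (hw' z hz).deriv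
  have hnum : HasDerivAt (fun z => 2 * (c : ℂ) * (E * deriv P z)) (2 * (c:ℂ) * (E * B)) 0 :=
    (hP'd.const_mul E).const_mul (2 * (c:ℂ))
  have hden : HasDerivAt (fun z => d z ^ 2) ((2:ℕ) * d 0 ^ 1 * (E * deriv P 0)) 0 :=
    (hd' 0 h0).pow 2
  have hg' : HasDerivAt g
      ((2 * (c:ℂ) * (E * B) * d 0 ^ 2 -
        2 * (c:ℂ) * (E * deriv P 0) * ((2:ℕ) * d 0 ^ 1 * (E * deriv P 0))) / (d 0 ^ 2) ^ 2) 0 :=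
    hnum.div hden (pow_ne_zero 2 (hdne 0 h0))
  have hww : deriv (deriv w) 0 = E * B / (2 * (c:ℂ)) - 2 * lam ^ 2 := by
    rw [hEqg.deriv_eq, hg'.deriv, hd0, hEA]
    field_simp
    ring
  have hiter2 : iteratedDeriv 2 w 0 = deriv (deriv w) 0 := by
    rw [iteratedDeriv_succ, iteratedDeriv_one]
  have ha2v : a2 = E * B / (4 * (c:ℂ)) - lam ^ 2 := by
    have h2a : 2 * a2 = E * B / (2 * (c:ℂ)) - 2 * lam ^ 2 := by
      rw [← hiter, hiter2, hww]
    field_simp at h2a ⊢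
    linear_combination h2a
  -- Schwarz lemma for phi
  have hφle : ∀ z ∈ ball (0:ℂ) 1, ‖φ z‖ ≤ 1 := by
    intro z hz
    have := Complex.norm_dslope_le_div_of_mapsTo_ball hwd (hmaps.mono_right ball_subset_closedBall) hz
    simpa using this
  have hφdiff : DifferentiableOn ℂ φ (ball (0:ℂ) 1) :=
    (differentiableOn_dslope (isOpen_ball.mem_nhds h0)).mpr hwd
  have hφ0 : φ 0 = lam := by
    rw [hφ_def, dslope_same, hderw0]
  -- Moebius transform
  set lc : ℂ := (starRingEnd ℂ) lam with hlc_def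
  have hlcabs : ‖lc‖ = ‖lam‖ := by
    rw [hlc_def, Complex.norm_conj]
  have hdenne : ∀ z ∈ ball (0:ℂ) 1, (1 : ℂ) - lc * φ z ≠ 0 := by
    intro z hz h
    have h1 : ‖lc * φ z‖ < 1 := by
      rw [norm_mul, hlcabs]
      calc ‖lam‖ * ‖φ z‖ ≤ ‖lam‖ * 1 :=
            mul_le_mul_of_nonneg_left (hφle z hz) (norm_nonneg _)
        _ < 1 := by rw [mul_one]; exact hlam
    have h2 : lc * φ z = 1 := by linear_combination -h
    rw [h2] at h1; simp at h1
  set ψ : ℂ → ℂ := fun z => (φ z - lam) / (1 - lc * φ z) with hψ_def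
  have hψd : DifferentiableOn ℂ ψ (ball (0:ℂ) 1) := by
    apply DifferentiableOn.div
    · exact hφdiff.sub_const lam
    · exact (differentiableOn_const 1).sub ((differentiableOn_const lc).mul hφdiff)
    · exact hdenne
  have hψ0 : ψ 0 = 0 := by
    rw [hψ_def]; simp [hφ0]
  have hψle : ∀ z ∈ ball (0:ℂ) 1, ‖ψ z‖ ≤ 1 := by
    intro z hz
    rw [hψ_def]
    simp only
    rw [norm_div]
    apply div_le_one_of_le₀ (aux_mobius lam (φ z) (hφle z hz) hlam) (norm_nonneg _)
  have hψder : ‖deriv ψ 0‖ ≤ 1 := by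
    apply le_of_forall_pos_le_add
    intro ε hε
    have hmaps' : MapsTo ψ (ball (0:ℂ) 1) (ball (ψ 0) (1 + ε)) := by
      rw [hψ0]
      intro z hz
      rw [mem_ball_zero_iff]
      calc ‖ψ z‖ ≤ 1 := hψle z hz
        _ < 1 + ε := by linarith
    have := Complex.norm_deriv_le_div_of_mapsTo_ball hψd (hmaps'.mono_right ball_subset_closedBall) one_pos
    simpa using this
  -- compute deriv psi 0
  have hone : 0 < 1 - (‖lam‖) ^ 2 := by
    nlinarith [norm_nonneg lam]
  have honeC : ((1 - (‖lam‖)^2 : ℝ) : ℂ) ≠ 0 := by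
    exact_mod_cast hone.ne'
  have hlclam : (1 : ℂ) - lc * lam = ((1 - (‖lam‖)^2 : ℝ) : ℂ) := by
    rw [hlc_def]
    rw [mul_comm, Complex.mul_conj]
    rw [Complex.normSq_eq_norm_sq]
    push_cast
    ring
  have hφ'0 : HasDerivAt φ a2 0 := by
    have h := (hφdiff.differentiableAt (isOpen_ball.mem_nhds h0)).hasDerivAt
    rwa [ha2] at h
  have hψ'0 : HasDerivAt ψ
      ((a2 * (1 - lc * φ 0) - (φ 0 - lam) * (0 - lc * a2)) / (1 - lc * φ 0) ^ 2) 0 := by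
    apply HasDerivAt.div
    · exact hφ'0.sub_const lam
    · exact (hasDerivAt_const 0 (1:ℂ)).sub (hφ'0.const_mul lc)
    · exact hdenne 0 h0
  have hderψ0 : deriv ψ 0 = a2 / ((1 - (‖lam‖)^2 : ℝ) : ℂ) := by
    rw [hψ'0.deriv, hφ0, hlclam]
    rw [div_eq_div_iff (pow_ne_zero 2 honeC) honeC]
    ring
  have habs : ‖a2‖ ≤ 1 - (‖lam‖) ^ 2 := by
    have h := hψder
    rw [hderψ0] at h
    rw [norm_div, Complex.norm_real, Real.norm_eq_abs, abs_of_pos hone] at h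
    calc ‖a2‖ = ‖a2‖ / (1 - ‖lam‖ ^ 2) * (1 - ‖lam‖ ^ 2) := by
          field_simp
      _ ≤ 1 * (1 - ‖lam‖ ^ 2) := by
          apply mul_le_mul_of_nonneg_right h hone.le
      _ = 1 - ‖lam‖ ^ 2 := one_mul _
  -- final assembly
  refine ⟨a2 / ((1 - (‖lam‖)^2 : ℝ) : ℂ), ?_, ?_⟩
  · rw [norm_div, Complex.norm_real, Real.norm_eq_abs, abs_of_pos hone]
    rw [div_le_one hone]
    exact habs
  · have hP2 : iteratedDeriv 2 P 0 = B := by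
      rw [iteratedDeriv_succ, iteratedDeriv_one]
    rw [hP2, hEinv]
    have hca : ((1 - (‖lam‖)^2 : ℝ) : ℂ) * (a2 / ((1 - (‖lam‖)^2 : ℝ) : ℂ)) = a2 := by
      rw [mul_comm, div_mul_cancel₀ _ honeC]
    rw [hca]
    have hcc : ((1:ℂ) - (β:ℂ)) * (Real.cos γ : ℂ) = (c : ℂ) := by
      rw [hc_def]; push_cast; ring
    -- from ha2v : a2 = E * B / (4 * c) - lam ^ 2
    have : E * B = 4 * (c:ℂ) * (a2 + lam ^ 2) := by
      rw [ha2v]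
      field_simp
      ring
    calc B = E⁻¹ * (E * B) := by field_simp
      _ = E⁻¹ * (4 * (c:ℂ) * (a2 + lam ^ 2)) := by rw [this]
      _ = 4 * (1 - (β:ℂ)) * (a2 + lam ^ 2) * E⁻¹ * (Real.cos γ : ℂ) := by
          rw [← hcc]; ring
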